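/- arXiv:1403.5397 — 5 statements merged into one kernel-verified Lean document; each statement's English description precedes it below -/
import Mathlib

section
/- Let L : J → ℝ be a smooth Lagrangian and let Γ^i_{αβ} : J → ℝ (1 ≤ i ≤ n, 1 ≤ α,β ≤ k) be smooth functions such that at every point of J and for every i, Γ_α(∂L/∂v^i_α) − ∂L/∂q^i = 0 (sum over α), where Γ_α = ∂/∂x^α + v^i_α ∂/∂q^i + Γ^i_{αβ} ∂/∂v^i_β. If a smooth map φ : ℝ^k → ℝ^n satisfies ∂²φ^i/∂x^α∂x^β (x) = Γ^i_{αβ}(j¹φ(x)) for all i, α, β and all x ∈ ℝ^k, then φ is a solution of the Euler–Lagrange equations. -/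
open Function

noncomputable section

/-- The first jet space `J = ℝᵏ × ℝⁿ × (Fin n → Fin k → ℝ)`,
with coordinates `(xᵅ, qⁱ, vⁱ_α)`. -/
abbrev Jet (k n : ℕ) : Type :=
  (Fin k → ℝ) × (Fin n → ℝ) × (Fin n → Fin k → ℝ)

variable {k n : ℕ}

/-- Partial derivative `∂F/∂xᵅ` of a function on the jet space. -/
noncomputable def pdX (F : Jet k n → ℝ) (α : Fin k) (z : Jet k n) : ℝ :=
  deriv (fun t => F (Function.update z.1 α t, z.2.1, z.2.2)) (z.1 α)

/-- Partial derivative `∂F/∂qⁱ` of a function on the jet space. -/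
noncomputable def pdQ (F : Jet k n → ℝ) (i : Fin n) (z : Jet k n) : ℝ :=
  deriv (fun t => F (z.1, Function.update z.2.1 i t, z.2.2)) (z.2.1 i)

/-- Partial derivative `∂F/∂vⁱ_α` of a function on the jet space. -/
noncomputable def pdV (F : Jet k n → ℝ) (i : Fin n) (α : Fin k) (z : Jet k n) : ℝ :=
  deriv (fun t => F (z.1, z.2.1,
    Function.update z.2.2 i (Function.update (z.2.2 i) α t))) (z.2.2 i α)

/-- Partial derivative `∂φⁱ/∂xᵅ` of a map `φ : ℝᵏ → ℝⁿ`. -/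
noncomputable def pD (φ : (Fin k → ℝ) → (Fin n → ℝ)) (i : Fin n) (α : Fin k)
    (x : Fin k → ℝ) : ℝ :=
  deriv (fun t => φ (Function.update x α t) i) (x α)

/-- Second partial derivative `∂²φⁱ/∂xᵅ∂xᵝ` of a map `φ : ℝᵏ → ℝⁿ`. -/
noncomputable def pD2 (φ : (Fin k → ℝ) → (Fin n → ℝ)) (i : Fin n) (α β : Fin k)
    (x : Fin k → ℝ) : ℝ :=
  deriv (fun t => pD φ i β (Function.update x α t)) (x α)

/-- First prolongation `j¹φ : ℝᵏ → J` of `φ : ℝᵏ → ℝⁿ`. -/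
noncomputable def j1 (φ : (Fin k → ℝ) → (Fin n → ℝ)) (x : Fin k → ℝ) : Jet k n :=
  (x, φ x, fun i α => pD φ i α x)

/-- `φ` is a smooth solution of the Euler–Lagrange equations of the Lagrangian `L`:
`∑_α ∂/∂xᵅ[(∂L/∂vⁱ_α) ∘ j¹φ] = (∂L/∂qⁱ) ∘ j¹φ` for all `i`. -/
def IsELSolution (L : Jet k n → ℝ) (φ : (Fin k → ℝ) → (Fin n → ℝ)) : Prop :=
  ContDiff ℝ (⊤ : ℕ∞) φ ∧
  ∀ (i : Fin n) (x : Fin k → ℝ),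
    (∑ α : Fin k, deriv (fun t => pdV L i α (j1 φ (Function.update x α t))) (x α))
      = pdQ L i (j1 φ x)

/-- `G = (G¹, …, Gᵏ)` is a conservation law for the Euler–Lagrange equations of `L`:
`∑_α ∂/∂xᵅ(Gᵅ ∘ j¹φ) = 0` for every solution `φ`. -/
def IsConservationLaw (L : Jet k n → ℝ) (G : Fin k → Jet k n → ℝ) : Prop :=
  ∀ φ : (Fin k → ℝ) → (Fin n → ℝ), IsELSolution L φ →
    ∀ x : Fin k → ℝ,
      (∑ α : Fin k, deriv (fun t => G α (j1 φ (Function.update x α t))) (x α)) = 0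

/-! ### Auxiliary material for statement0 -/

/-- Coordinate basis vector in the `x`-slot of the jet space. -/
def eX (k n : ℕ) (α : Fin k) : Jet k n := (Pi.single α 1, 0, 0)

/-- Coordinate basis vector in the `q`-slot of the jet space. -/
def eQ (k n : ℕ) (i : Fin n) : Jet k n := (0, Pi.single i 1, 0)

/-- Coordinate basis vector in the `v`-slot of the jet space. -/
def eV (k n : ℕ) (i : Fin n) (α : Fin k) : Jet k n :=
  (0, 0, Pi.single i (Pi.single α 1))

lemma hasDerivAt_updateV (w : Fin n → Fin k → ℝ) (i : Fin n) (α : Fin k) (t : ℝ) :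
    HasDerivAt (fun s : ℝ => Function.update w i (Function.update (w i) α s))
      (Pi.single i (Pi.single α 1)) t := by
  have h : (fun s : ℝ => Function.update w i (Function.update (w i) α s))
      = fun s : ℝ => w + (s - w i α) • (Pi.single i (Pi.single α 1) : Fin n → Fin k → ℝ) := by
    funext s; funext j β
    by_cases hj : j = i
    · subst hj
      by_cases hβ : β = α
      · subst hβ; simp
      · simp [Function.update_apply, hβ, Pi.single_apply]
    · simp [Function.update_apply, hj, Pi.single_apply]
  rw [h]
  simpa using (((hasDerivAt_id t).sub_const (w i α)).smul_const
    (Pi.single i (Pi.single α 1) : Fin n → Fin k → ℝ)).const_add w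

/-- `pdX` as a directional derivative. -/
lemma pdX_eq_fderiv (F : Jet k n → ℝ) (α : Fin k) (z : Jet k n)
    (hF : DifferentiableAt ℝ F z) :
    pdX F α z = fderiv ℝ F z (eX k n α) := by
  have hcurve : HasDerivAt (fun t : ℝ => ((Function.update z.1 α t, z.2.1, z.2.2) : Jet k n))
      (eX k n α) (z.1 α) :=
    HasDerivAt.prodMk (hasDerivAt_update z.1 α (z.1 α))
      (HasDerivAt.prodMk (hasDerivAt_const _ _) (hasDerivAt_const _ _))
  have : HasDerivAt (fun t : ℝ => F (Function.update z.1 α t, z.2.1, z.2.2))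
      (fderiv ℝ F z (eX k n α)) (z.1 α) := by
    have h0 : ((Function.update z.1 α (z.1 α), z.2.1, z.2.2) : Jet k n) = z := by
      simp
    have hf : HasFDerivAt F (fderiv ℝ F z)
        ((Function.update z.1 α (z.1 α), z.2.1, z.2.2) : Jet k n) := by
      rw [h0]; exact hF.hasFDerivAt
    exact hf.comp_hasDerivAt _ hcurve
  exact this.deriv

/-- `pdQ` as a directional derivative. -/
lemma pdQ_eq_fderiv (F : Jet k n → ℝ) (i : Fin n) (z : Jet k n)
    (hF : DifferentiableAt ℝ F z) :
    pdQ F i z = fderiv ℝ F z (eQ k n i) := by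
  have hcurve : HasDerivAt (fun t : ℝ => ((z.1, Function.update z.2.1 i t, z.2.2) : Jet k n))
      (eQ k n i) (z.2.1 i) :=
    HasDerivAt.prodMk (hasDerivAt_const _ _)
      (HasDerivAt.prodMk (hasDerivAt_update z.2.1 i (z.2.1 i)) (hasDerivAt_const _ _))
  have : HasDerivAt (fun t : ℝ => F (z.1, Function.update z.2.1 i t, z.2.2))
      (fderiv ℝ F z (eQ k n i)) (z.2.1 i) := by
    have h0 : ((z.1, Function.update z.2.1 i (z.2.1 i), z.2.2) : Jet k n) = z := by
      simp
    have hf : HasFDerivAt F (fderiv ℝ F z)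
        ((z.1, Function.update z.2.1 i (z.2.1 i), z.2.2) : Jet k n) := by
      rw [h0]; exact hF.hasFDerivAt
    exact hf.comp_hasDerivAt _ hcurve
  exact this.deriv

/-- `pdV` as a directional derivative. -/
lemma pdV_eq_fderiv (F : Jet k n → ℝ) (i : Fin n) (α : Fin k) (z : Jet k n)
    (hF : DifferentiableAt ℝ F z) :
    pdV F i α z = fderiv ℝ F z (eV k n i α) := by
  have hcurve : HasDerivAt (fun t : ℝ =>
      ((z.1, z.2.1, Function.update z.2.2 i (Function.update (z.2.2 i) α t)) : Jet k n))
      (eV k n i α) (z.2.2 i α) :=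
    HasDerivAt.prodMk (hasDerivAt_const _ _)
      (HasDerivAt.prodMk (hasDerivAt_const _ _) (hasDerivAt_updateV z.2.2 i α (z.2.2 i α)))
  have : HasDerivAt (fun t : ℝ =>
      F (z.1, z.2.1, Function.update z.2.2 i (Function.update (z.2.2 i) α t)))
      (fderiv ℝ F z (eV k n i α)) (z.2.2 i α) := by
    have h0 : ((z.1, z.2.1, Function.update z.2.2 i (Function.update (z.2.2 i) α (z.2.2 i α)))
        : Jet k n) = z := by simp
    have hf : HasFDerivAt F (fderiv ℝ F z)
        ((z.1, z.2.1, Function.update z.2.2 i (Function.update (z.2.2 i) α (z.2.2 i α)))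
          : Jet k n) := by
      rw [h0]; exact hF.hasFDerivAt
    exact hf.comp_hasDerivAt _ hcurve
  exact this.deriv

/-- `pD` as a directional derivative. -/
lemma pD_eq_fderiv (φ : (Fin k → ℝ) → (Fin n → ℝ)) (hφ : Differentiable ℝ φ)
    (i : Fin n) (α : Fin k) (x : Fin k → ℝ) :
    pD φ i α x = fderiv ℝ φ x (Pi.single α 1) i := by
  have h : HasDerivAt (fun t : ℝ => φ (Function.update x α t))
      (fderiv ℝ φ x (Pi.single α 1)) (x α) := by
    have h0 : Function.update x α (x α) = x := Function.update_eq_self _ _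
    have hf : HasFDerivAt φ (fderiv ℝ φ x) (Function.update x α (x α)) := by
      rw [h0]; exact (hφ x).hasFDerivAt
    exact hf.comp_hasDerivAt _ (hasDerivAt_update x α (x α))
  exact (hasDerivAt_pi.mp h i).deriv

/-- Directional derivatives of a smooth function are smooth. -/
lemma contDiff_fderiv_apply {E F : Type*} [NormedAddCommGroup E] [NormedSpace ℝ E]
    [NormedAddCommGroup F] [NormedSpace ℝ F] {f : E → F}
    (hf : ContDiff ℝ (⊤ : ℕ∞) f) (v : E) :
    ContDiff ℝ (⊤ : ℕ∞) (fun x => fderiv ℝ f x v) :=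
  (hf.fderiv_right (by simp)).clm_apply contDiff_const

/-- Chain rule along the prolongation `j¹φ`. -/
lemma deriv_comp_j1 (F : Jet k n → ℝ) (hF : ContDiff ℝ (⊤ : ℕ∞) F)
    (φ : (Fin k → ℝ) → (Fin n → ℝ)) (hφ : ContDiff ℝ (⊤ : ℕ∞) φ)
    (α : Fin k) (x : Fin k → ℝ) :
    deriv (fun t => F (j1 φ (Function.update x α t))) (x α)
      = pdX F α (j1 φ x) + (∑ j : Fin n, pD φ j α x * pdQ F j (j1 φ x))
        + ∑ j : Fin n, ∑ β : Fin k, pD2 φ j α β x * pdV F j β (j1 φ x) := by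
  have hφd : Differentiable ℝ φ := hφ.differentiable (by simp)
  have hFd : Differentiable ℝ F := hF.differentiable (by simp)
  set z : Jet k n := j1 φ x with hz
  set P : (Fin k → ℝ) → (Fin n → Fin k → ℝ) :=
    fun y j β => fderiv ℝ φ y (Pi.single β 1) j with hPdef
  have hpD : ∀ (j : Fin n) (β : Fin k), pD φ j β = fun y => P y j β := by
    intro j β; funext y; exact pD_eq_fderiv φ hφd j β y
  have hj1 : j1 φ = fun y => ((y, φ y, P y) : Jet k n) := by
    funext y
    simp only [j1]
    refine Prod.ext rfl (Prod.ext rfl ?_)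
    funext j β
    exact pD_eq_fderiv φ hφd j β y
  have hP : ContDiff ℝ (⊤ : ℕ∞) P := by
    refine contDiff_pi.mpr fun j => contDiff_pi.mpr fun β => ?_
    exact (contDiff_pi.mp (contDiff_fderiv_apply hφ (Pi.single β 1))) j
  -- derivative of components of the curve
  have h1 : HasDerivAt (fun t : ℝ => Function.update x α t) (Pi.single α 1) (x α) :=
    hasDerivAt_update x α (x α)
  have hupd : Function.update x α (x α) = x := Function.update_eq_self _ _
  have h2 : HasDerivAt (fun t : ℝ => φ (Function.update x α t))
      (fun j => pD φ j α x) (x α) := by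
    have hf : HasFDerivAt φ (fderiv ℝ φ x) (Function.update x α (x α)) := by
      rw [hupd]; exact (hφd x).hasFDerivAt
    have := hf.comp_hasDerivAt _ h1
    have heq : (fun j => pD φ j α x) = fderiv ℝ φ x (Pi.single α 1) := by
      funext j; exact pD_eq_fderiv φ hφd j α x
    rw [heq]; exact this
  have h3 : HasDerivAt (fun t : ℝ => P (Function.update x α t))
      (fun j β => pD2 φ j α β x) (x α) := by
    have hf : HasFDerivAt P (fderiv ℝ P x) (Function.update x α (x α)) := by
      rw [hupd]; exact ((hP.differentiable (by simp)) x).hasFDerivAt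
    have hcomp := hf.comp_hasDerivAt _ h1
    have heq : (fun j β => pD2 φ j α β x) = fderiv ℝ P x (Pi.single α 1) := by
      funext j β
      have hjβ : HasDerivAt (fun t : ℝ => P (Function.update x α t) j β)
          (fderiv ℝ P x (Pi.single α 1) j β) (x α) :=
        hasDerivAt_pi.mp (hasDerivAt_pi.mp hcomp j) β
      have : pD2 φ j α β x = deriv (fun t : ℝ => P (Function.update x α t) j β) (x α) := by
        simp only [pD2, hpD]
      rw [this, hjβ.deriv]
    rw [heq]; exact hcomp
  -- derivative of the curve in jet space
  set W : Jet k n :=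
    (Pi.single α 1, (fun j => pD φ j α x), (fun j β => pD2 φ j α β x)) with hW
  have hcurve : HasDerivAt (fun t : ℝ => j1 φ (Function.update x α t)) W (x α) := by
    rw [hj1]; exact HasDerivAt.prodMk h1 (HasDerivAt.prodMk h2 h3)
  have hf : HasFDerivAt F (fderiv ℝ F z) (j1 φ (Function.update x α (x α))) := by
    rw [hupd]; exact (hFd z).hasFDerivAt
  have hmain : HasDerivAt (fun t => F (j1 φ (Function.update x α t)))
      (fderiv ℝ F z W) (x α) := hf.comp_hasDerivAt _ hcurve
  rw [hmain.deriv]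
  -- decompose the direction W into basis vectors
  have hWdec : W = eX k n α + (∑ j : Fin n, pD φ j α x • eQ k n j)
      + ∑ j : Fin n, ∑ β : Fin k, pD2 φ j α β x • eV k n j β := by
    refine Prod.ext ?_ (Prod.ext ?_ ?_)
    · simp [hW, eX, eQ, eV, Prod.fst_sum]
    · funext j
      simp [hW, eX, eQ, eV, Prod.fst_sum, Prod.snd_sum, Finset.sum_apply,
        Pi.single_apply, mul_ite, Finset.sum_ite_eq, Finset.sum_ite_eq']
    · funext j β
      simp [hW, eX, eQ, eV, Prod.fst_sum, Prod.snd_sum, Finset.sum_apply,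
        Pi.single_apply, mul_ite, Finset.sum_ite_eq, Finset.sum_ite_eq']
  have e1 : pdX F α z = fderiv ℝ F z (eX k n α) := pdX_eq_fderiv F α z (hFd z)
  have e2 : ∀ j, pdQ F j z = fderiv ℝ F z (eQ k n j) :=
    fun j => pdQ_eq_fderiv F j z (hFd z)
  have e3 : ∀ j β, pdV F j β z = fderiv ℝ F z (eV k n j β) :=
    fun j β => pdV_eq_fderiv F j β z (hFd z)
  rw [hWdec, map_add, map_add, map_sum, e1]
  simp_rw [map_sum, map_smul, smul_eq_mul, e2, e3]

/-- if an integrable SOPDE with coefficients `Γ` satisfies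
`Γ_α(∂L/∂vⁱ_α) − ∂L/∂qⁱ = 0` everywhere, then any `φ` whose second jet solves the
second-order system defined by `Γ` is a solution of the Euler–Lagrange equations. -/
theorem statement0 (k n : ℕ) (hk : 1 ≤ k) (hn : 1 ≤ n)
    (L : Jet k n → ℝ) (hL : ContDiff ℝ (⊤ : ℕ∞) L)
    (Γ : Fin n → Fin k → Fin k → Jet k n → ℝ)
    (hΓ : ∀ i α β, ContDiff ℝ (⊤ : ℕ∞) (Γ i α β))
    (hsopdeEL : ∀ (z : Jet k n) (i : Fin n),
      (∑ α : Fin k,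
        (pdX (pdV L i α) α z
          + ∑ j : Fin n, z.2.2 j α * pdQ (pdV L i α) j z
          + ∑ j : Fin n, ∑ β : Fin k, Γ j α β z * pdV (pdV L i α) j β z))
        - pdQ L i z = 0)
    (φ : (Fin k → ℝ) → (Fin n → ℝ)) (hφ : ContDiff ℝ (⊤ : ℕ∞) φ)
    (hsol : ∀ (i : Fin n) (α β : Fin k) (x : Fin k → ℝ),
      pD2 φ i α β x = Γ i α β (j1 φ x)) :
    IsELSolution L φ := by
  have hLd : Differentiable ℝ L := hL.differentiable (by simp)
  refine ⟨hφ, fun i x => ?_⟩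
  have hrw : ∀ (i' : Fin n) (α : Fin k),
      pdV L i' α = fun z => fderiv ℝ L z (eV k n i' α) := by
    intro i' α; funext z; exact pdV_eq_fderiv L i' α z (hLd z)
  set z := j1 φ x with hz
  have hchain : ∀ α : Fin k,
      deriv (fun t => pdV L i α (j1 φ (Function.update x α t))) (x α)
        = pdX (pdV L i α) α z
          + (∑ j : Fin n, z.2.2 j α * pdQ (pdV L i α) j z)
          + ∑ j : Fin n, ∑ β : Fin k, Γ j α β z * pdV (pdV L i α) j β z := by
    intro α
    have hFc : ContDiff ℝ (⊤ : ℕ∞) (pdV L i α) := by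
      rw [hrw]; exact contDiff_fderiv_apply hL (eV k n i α)
    rw [deriv_comp_j1 (pdV L i α) hFc φ hφ α x]
    simp only [hsol]
    rfl
  have h := hsopdeEL z i
  have hsum : (∑ α : Fin k, deriv (fun t => pdV L i α (j1 φ (Function.update x α t))) (x α))
      = ∑ α : Fin k, (pdX (pdV L i α) α z
          + (∑ j : Fin n, z.2.2 j α * pdQ (pdV L i α) j z)
          + ∑ j : Fin n, ∑ β : Fin k, Γ j α β z * pdV (pdV L i α) j β z) :=
    Finset.sum_congr rfl fun α _ => hchain α
  rw [hsum]
  linarith [h]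
end
end

section
/- Let L : J → ℝ be a smooth regular Lagrangian, i.e. at every point of J the (nk)×(nk) matrix with entries ∂²L/∂v^i_α ∂v^j_β (rows indexed by pairs (i,α), columns by (j,β)) is invertible. Let X^i_α, X^i_{αβ} : J → ℝ be smooth functions such that at every point of J, for all j and β: ∑_{i,α} (v^i_α − X^i_α) · ∂²L/∂v^j_β ∂v^i_α = 0 (this is the third of the coordinate equations obtained by expanding dx^α(X_β) = δ^α_β and i_{X_α}Ω^α_L = (k−1)dL for the k-vector field X_α = ∂/∂x^α + X^i_α ∂/∂q^i + X^i_{αβ} ∂/∂v^i_β). Then X^i_α = v^i_α at every point of J, i.e. the k-vector field X is a SOPDE. -/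
open Function

noncomputable section

variable {k n : ℕ}

/-- for a regular Lagrangian, any `k`-vector field satisfying the third
coordinate equation coming from `dxᵅ(X_β) = δᵅ_β`, `i_{X_α}Ωᵅ_L = (k−1)dL` is a SOPDE,
i.e. `Xⁱ_α = vⁱ_α`. -/
theorem statement3 (k n : ℕ) (hk : 1 ≤ k) (hn : 1 ≤ n)
    (L : Jet k n → ℝ) (hL : ContDiff ℝ (⊤ : ℕ∞) L)
    (hreg : ∀ z : Jet k n,
      IsUnit (Matrix.of fun p q : Fin n × Fin k => pdV (pdV L q.1 q.2) p.1 p.2 z))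
    (X : Fin n → Fin k → Jet k n → ℝ)
    (hX : ∀ i α, ContDiff ℝ (⊤ : ℕ∞) (X i α))
    (W : Fin n → Fin k → Fin k → Jet k n → ℝ)
    (hW : ∀ i α β, ContDiff ℝ (⊤ : ℕ∞) (W i α β))
    (heq3 : ∀ (z : Jet k n) (j : Fin n) (β : Fin k),
      (∑ i : Fin n, ∑ α : Fin k,
        (z.2.2 i α - X i α z) * pdV (pdV L j β) i α z) = 0) :
    ∀ (z : Jet k n) (i : Fin n) (α : Fin k), X i α z = z.2.2 i α := by
  intro z i α
  set M : Matrix (Fin n × Fin k) (Fin n × Fin k) ℝ :=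
    Matrix.of fun p q : Fin n × Fin k => pdV (pdV L q.1 q.2) p.1 p.2 z with hM
  set c : Fin n × Fin k → ℝ := fun p => z.2.2 p.1 p.2 - X p.1 p.2 z with hc
  have hvm : Matrix.vecMul c M = 0 := by
    funext q
    have := heq3 z q.1 q.2
    simpa [Matrix.vecMul, dotProduct, hM, hc, Fintype.sum_prod_type] using this
  have hdet : IsUnit M.det := (Matrix.isUnit_iff_isUnit_det M).mp (hreg z)
  have hc0 : c = 0 := by
    have h1 : Matrix.vecMul c (M * M⁻¹) = Matrix.vecMul (Matrix.vecMul c M) M⁻¹ :=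
      (Matrix.vecMul_vecMul c M M⁻¹).symm
    rw [Matrix.mul_nonsing_inv M hdet, Matrix.vecMul_one, hvm] at h1
    simpa [Matrix.zero_vecMul] using h1
  have := congrFun hc0 (i, α)
  simp [hc] at this
  linarith
end
end

section
/- Let L : J → ℝ be a smooth Lagrangian and let G = (G^1,…,G^k) : J → ℝ^k have smooth components and be a conservation law for the Euler–Lagrange equations of L. Let Γ^i_{αβ} : J → ℝ be smooth SOPDE coefficients such that (a) at every point of J and every i, ∑_α Γ_α(∂L/∂v^i_α) = ∂L/∂q^i, where Γ_α = ∂/∂x^α + v^i_α ∂/∂q^i + Γ^i_{αβ} ∂/∂v^i_β, and (b) the SOPDE is integrable in the sense that through every point z ∈ J there passes an integral section: there exist a smooth φ : U → ℝ^n on an open neighborhood U of some x₀ ∈ ℝ^k with j¹φ(x₀) = z and ∂²φ^i/∂x^α∂x^β = Γ^i_{αβ}∘j¹φ on U. Then ∑_{α=1}^k Γ_α(G^α) = 0 at every point of J. -/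
open Function

noncomputable section

variable {k n : ℕ}

/-- The vector field `Γ_α = ∂/∂xᵅ + vⁱ_α ∂/∂qⁱ + Γⁱ_{αβ} ∂/∂vⁱ_β` of a SOPDE applied
to a function `F` on the jet space. -/
noncomputable def sopdeOp (Γ : Fin n → Fin k → Fin k → Jet k n → ℝ) (α : Fin k)
    (F : Jet k n → ℝ) (z : Jet k n) : ℝ :=
  pdX F α z + (∑ j : Fin n, z.2.2 j α * pdQ F j z)
    + ∑ j : Fin n, ∑ β : Fin k, Γ j α β z * pdV F j β z

namespace JetAux
open Function

variable {k n : ℕ}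

/-- basis vectors -/
def eX (α : Fin k) : Jet k n := (Pi.single α 1, 0, 0)
def eQ (i : Fin n) : Jet k n := (0, Pi.single i 1, 0)
def eV (i : Fin n) (α : Fin k) : Jet k n := (0, 0, Pi.single i (Pi.single α 1))

lemma line_hasDerivAt {E : Type*} [NormedAddCommGroup E] [NormedSpace ℝ E]
    (z w : E) (t₀ : ℝ) : HasDerivAt (fun t => z + (t - t₀) • w) w t₀ := by
  have h := (((hasDerivAt_id t₀).sub_const t₀).smul_const w).const_add z
  simpa using h

lemma deriv_line {E : Type*} [NormedAddCommGroup E] [NormedSpace ℝ E]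
    {F : E → ℝ} {z w : E} (hF : DifferentiableAt ℝ F z) (t₀ : ℝ)
    {c : ℝ → E} (hc : c = fun t => z + (t - t₀) • w) :
    deriv (fun t => F (c t)) t₀ = fderiv ℝ F z w := by
  have hcd : HasDerivAt c w t₀ := by rw [hc]; exact line_hasDerivAt _ _ _
  have hF' : HasFDerivAt F (fderiv ℝ F z) (c t₀) := by
    rw [hc]; simpa using hF.hasFDerivAt
  exact (hF'.comp_hasDerivAt t₀ hcd).deriv

lemma pdX_eq {F : Jet k n → ℝ} {z : Jet k n} (hF : DifferentiableAt ℝ F z) (α : Fin k) :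
    pdX F α z = fderiv ℝ F z (eX α) := by
  refine deriv_line hF (z.1 α) ?_
  funext t
  refine Prod.ext ?_ (Prod.ext ?_ ?_)
  · funext γ
    by_cases h : γ = α <;>
      simp [eX, Function.update_apply, Pi.single_apply, h]
  · simp [eX]
  · simp [eX]

lemma pdQ_eq {F : Jet k n → ℝ} {z : Jet k n} (hF : DifferentiableAt ℝ F z) (i : Fin n) :
    pdQ F i z = fderiv ℝ F z (eQ i) := by
  refine deriv_line hF (z.2.1 i) ?_
  funext t
  refine Prod.ext ?_ (Prod.ext ?_ ?_)
  · simp [eQ]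
  · funext j
    by_cases h : j = i <;>
      simp [eQ, Function.update_apply, Pi.single_apply, h]
  · simp [eQ]

lemma pdV_eq {F : Jet k n → ℝ} {z : Jet k n} (hF : DifferentiableAt ℝ F z)
    (i : Fin n) (α : Fin k) :
    pdV F i α z = fderiv ℝ F z (eV i α) := by
  refine deriv_line hF (z.2.2 i α) ?_
  funext t
  refine Prod.ext ?_ (Prod.ext ?_ ?_)
  · simp [eV]
  · simp [eV]
  · funext j β
    by_cases h : j = i
    · subst h
      by_cases h2 : β = α <;>
        simp [eV, Function.update_apply, Pi.single_apply, h2]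
    · simp [eV, Function.update_apply, Pi.single_apply, h]

lemma decomp (w : Jet k n) :
    w = (∑ γ : Fin k, w.1 γ • eX γ) + (∑ j : Fin n, w.2.1 j • eQ j)
      + ∑ j : Fin n, ∑ β : Fin k, w.2.2 j β • eV j β := by
  refine Prod.ext ?_ (Prod.ext ?_ ?_)
  · funext δ
    simp [eX, eQ, eV, Prod.fst_sum, Prod.snd_sum, Finset.sum_apply, Pi.single_apply, mul_ite, Finset.sum_ite_eq]
  · funext j
    simp [eX, eQ, eV, Prod.fst_sum, Prod.snd_sum, Finset.sum_apply, Pi.single_apply, mul_ite, Finset.sum_ite_eq]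
  · funext j β
    simp [eX, eQ, eV, Prod.fst_sum, Prod.snd_sum, Finset.sum_apply, Pi.single_apply, mul_ite, Finset.sum_ite_eq]

lemma fderiv_decomp {F : Jet k n → ℝ} {z : Jet k n} (hF : DifferentiableAt ℝ F z)
    (w : Jet k n) :
    fderiv ℝ F z w = (∑ γ : Fin k, w.1 γ * pdX F γ z)
      + (∑ j : Fin n, w.2.1 j * pdQ F j z)
      + ∑ j : Fin n, ∑ β : Fin k, w.2.2 j β * pdV F j β z := by
  conv_lhs => rw [decomp w]
  simp only [map_add, map_sum, map_smul, smul_eq_mul]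
  simp only [pdX_eq hF, pdQ_eq hF, pdV_eq hF]

lemma update_line (x : Fin k → ℝ) (α : Fin k) :
    (fun t => Function.update x α t) = fun t => x + (t - x α) • (Pi.single α 1 : Fin k → ℝ) := by
  funext t γ
  by_cases h : γ = α <;> simp [Function.update_apply, Pi.single_apply, h]

lemma update_hasDerivAt (x : Fin k → ℝ) (α : Fin k) :
    HasDerivAt (fun t => Function.update x α t) (Pi.single α (1:ℝ)) (x α) := by
  rw [update_line]; exact line_hasDerivAt _ _ _

lemma pD_eq {φ : (Fin k → ℝ) → (Fin n → ℝ)} {x : Fin k → ℝ}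
    (hφ : DifferentiableAt ℝ φ x) (i : Fin n) (β : Fin k) :
    pD φ i β x = fderiv ℝ φ x (Pi.single β 1) i := by
  have h1 := update_hasDerivAt x β
  have hF' : HasFDerivAt φ (fderiv ℝ φ x) ((fun t => Function.update x β t) (x β)) := by
    simpa [Function.update_eq_self] using hφ.hasFDerivAt
  have H : HasDerivAt (fun t => φ (Function.update x β t))
      (fderiv ℝ φ x (Pi.single β 1)) (x β) := hF'.comp_hasDerivAt (x β) h1
  exact (hasDerivAt_pi.mp H i).deriv

lemma chain {U : Set (Fin k → ℝ)} (hU : IsOpen U)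
    {φ : (Fin k → ℝ) → (Fin n → ℝ)} (hφ : ContDiffOn ℝ (⊤ : ℕ∞) φ U)
    {x : Fin k → ℝ} (hx : x ∈ U)
    {F : Jet k n → ℝ} (hF : DifferentiableAt ℝ F (j1 φ x)) (α : Fin k) :
    deriv (fun t => F (j1 φ (Function.update x α t))) (x α)
      = pdX F α (j1 φ x) + (∑ j : Fin n, pD φ j α x * pdQ F j (j1 φ x))
        + ∑ j : Fin n, ∑ β : Fin k, pD2 φ j α β x * pdV F j β (j1 φ x) := by
  have hmem : U ∈ nhds x := hU.mem_nhds hx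
  have hφdOn : DifferentiableOn ℝ φ U := hφ.differentiableOn (by simp)
  have hφx : DifferentiableAt ℝ φ x := hφdOn.differentiableAt hmem
  have h1 := update_hasDerivAt x α
  -- second component
  have hφ' : HasFDerivAt φ (fderiv ℝ φ x) ((fun t => Function.update x α t) (x α)) := by
    simpa [Function.update_eq_self] using hφx.hasFDerivAt
  have h2 : HasDerivAt (fun t => φ (Function.update x α t))
      (fun j => pD φ j α x) (x α) := by
    have H := hφ'.comp_hasDerivAt (x α) h1
    have : (fun j => pD φ j α x) = fderiv ℝ φ x (Pi.single α 1) := by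
      funext j; exact pD_eq hφx j α
    rw [this]; exact H
  -- third component
  have hfd : ContDiffOn ℝ 1 (fderiv ℝ φ) U := by
    refine hφ.fderiv_of_isOpen hU ?_
    norm_cast
  have hA : DifferentiableAt ℝ (fderiv ℝ φ) x :=
    (hfd.differentiableOn one_ne_zero).differentiableAt hmem
  have h3 : HasDerivAt (fun t => (fun j β => pD φ j β (Function.update x α t)))
      (fun j β => pD2 φ j α β x) (x α) := by
    refine hasDerivAt_pi.mpr fun j => hasDerivAt_pi.mpr fun β => ?_
    have hg : DifferentiableAt ℝ (fun y => fderiv ℝ φ y (Pi.single β 1) j) x := by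
      have := hA.clm_apply (differentiableAt_const (Pi.single β 1))
      exact differentiableAt_pi.mp this j
    have hev : (fun y => pD φ j β y) =ᶠ[nhds x] fun y => fderiv ℝ φ y (Pi.single β 1) j := by
      filter_upwards [hmem] with y hy
      exact pD_eq (hφdOn.differentiableAt (hU.mem_nhds hy)) j β
    have hpDx : DifferentiableAt ℝ (fun y => pD φ j β y) x := hg.congr_of_eventuallyEq hev
    have hpDx' : DifferentiableAt ℝ (fun y => pD φ j β y)
        ((fun t => Function.update x α t) (x α)) := by
      simpa [Function.update_eq_self] using hpDx
    have hcomp : DifferentiableAt ℝ (fun t => pD φ j β (Function.update x α t)) (x α) := by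
      exact hpDx'.comp (x α) h1.differentiableAt
    exact hcomp.hasDerivAt
  -- full curve
  set w : Jet k n := (Pi.single α 1, (fun j => pD φ j α x), fun j β => pD2 φ j α β x) with hw
  have hc : HasDerivAt (fun t => j1 φ (Function.update x α t)) w (x α) := h1.prodMk (h2.prodMk h3)
  have hF' : HasFDerivAt F (fderiv ℝ F (j1 φ x))
      ((fun t => j1 φ (Function.update x α t)) (x α)) := by
    simpa [Function.update_eq_self] using hF.hasFDerivAt
  have hder := (hF'.comp_hasDerivAt (x α) hc).deriv
  have : deriv (fun t => F (j1 φ (Function.update x α t))) (x α) = fderiv ℝ F (j1 φ x) w := hder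
  rw [this, fderiv_decomp hF w]
  simp [hw, Pi.single_apply, ite_mul, Finset.sum_ite_eq]

lemma chain' {U : Set (Fin k → ℝ)} (hU : IsOpen U)
    {φ : (Fin k → ℝ) → (Fin n → ℝ)} (hφ : ContDiffOn ℝ (⊤ : ℕ∞) φ U)
    {x : Fin k → ℝ} (hx : x ∈ U)
    {Γ : Fin n → Fin k → Fin k → Jet k n → ℝ}
    (hso : ∀ x ∈ U, ∀ (i : Fin n) (α β : Fin k), pD2 φ i α β x = Γ i α β (j1 φ x))
    {F : Jet k n → ℝ} (hF : DifferentiableAt ℝ F (j1 φ x)) (α : Fin k) :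
    deriv (fun t => F (j1 φ (Function.update x α t))) (x α) = sopdeOp Γ α F (j1 φ x) := by
  rw [chain hU hφ hx hF α]
  simp only [sopdeOp]
  congr 1
  exact Finset.sum_congr rfl fun j _ => Finset.sum_congr rfl fun β _ => by
    rw [hso x hx j α β]

lemma pdV_differentiable {L : Jet k n → ℝ} (hL : ContDiff ℝ (⊤ : ℕ∞) L)
    (i : Fin n) (α : Fin k) : Differentiable ℝ (pdV L i α) := by
  have hfd : ContDiff ℝ 1 (fderiv ℝ L) := hL.fderiv_right (by norm_cast)
  have heq : pdV L i α = fun z => fderiv ℝ L z (eV i α) := by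
    funext z
    exact pdV_eq ((hL.differentiable (by simp)) z) i α
  rw [heq]
  exact (hfd.differentiable one_ne_zero).clm_apply (differentiable_const _)

end JetAux

/-- if `G` is a conservation law, then for every integrable SOPDE `Γ`
satisfying `Γ_α(∂L/∂vⁱ_α) = ∂L/∂qⁱ`, one has `∑_α Γ_α(Gᵅ) = 0` everywhere. -/
theorem statement5 (k n : ℕ) (hk : 1 ≤ k) (hn : 1 ≤ n)
    (L : Jet k n → ℝ) (hL : ContDiff ℝ (⊤ : ℕ∞) L)
    (G : Fin k → Jet k n → ℝ) (hG : ∀ α, ContDiff ℝ (⊤ : ℕ∞) (G α))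
    -- `G` is a conservation law: the divergence of `G ∘ j¹φ` vanishes on the domain
    -- of every (locally defined) solution `φ` of the Euler–Lagrange equations
    (hcons : ∀ U : Set (Fin k → ℝ), IsOpen U →
      ∀ φ : (Fin k → ℝ) → (Fin n → ℝ), ContDiffOn ℝ (⊤ : ℕ∞) φ U →
      (∀ x ∈ U, ∀ i : Fin n,
        (∑ α : Fin k, deriv (fun t => pdV L i α (j1 φ (Function.update x α t))) (x α))
          = pdQ L i (j1 φ x)) →
      ∀ x ∈ U,
        (∑ α : Fin k, deriv (fun t => G α (j1 φ (Function.update x α t))) (x α)) = 0)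
    (Γ : Fin n → Fin k → Fin k → Jet k n → ℝ)
    (hΓ : ∀ i α β, ContDiff ℝ (⊤ : ℕ∞) (Γ i α β))
    -- (a) the SOPDE satisfies `∑_α Γ_α(∂L/∂vⁱ_α) = ∂L/∂qⁱ`
    (ha : ∀ (z : Jet k n) (i : Fin n),
      (∑ α : Fin k, sopdeOp Γ α (pdV L i α) z) = pdQ L i z)
    -- (b) the SOPDE is integrable: an integral section passes through each point of `J`
    (hb : ∀ z : Jet k n, ∃ (U : Set (Fin k → ℝ)) (x₀ : Fin k → ℝ)
        (φ : (Fin k → ℝ) → (Fin n → ℝ)), IsOpen U ∧ x₀ ∈ U ∧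
      ContDiffOn ℝ (⊤ : ℕ∞) φ U ∧ j1 φ x₀ = z ∧
      (∀ x ∈ U, ∀ (i : Fin n) (α β : Fin k), pD2 φ i α β x = Γ i α β (j1 φ x))) :
    ∀ z : Jet k n, (∑ α : Fin k, sopdeOp Γ α (G α) z) = 0 := by
  intro z
  obtain ⟨U, x₀, φ, hU, hx₀, hφ, hjz, hso⟩ := hb z
  have hEL : ∀ x ∈ U, ∀ i : Fin n,
      (∑ α : Fin k, deriv (fun t => pdV L i α (j1 φ (Function.update x α t))) (x α))
        = pdQ L i (j1 φ x) := by
    intro x hx i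
    have h1 : ∀ α : Fin k,
        deriv (fun t => pdV L i α (j1 φ (Function.update x α t))) (x α)
          = sopdeOp Γ α (pdV L i α) (j1 φ x) := fun α =>
      JetAux.chain' hU hφ hx hso ((JetAux.pdV_differentiable hL i α).differentiableAt) α
    rw [Finset.sum_congr rfl fun α _ => h1 α]
    exact ha (j1 φ x) i
  have hdiv := hcons U hU φ hφ hEL x₀ hx₀
  have h2 : ∀ α : Fin k,
      deriv (fun t => G α (j1 φ (Function.update x₀ α t))) (x₀ α)
        = sopdeOp Γ α (G α) (j1 φ x₀) := fun α =>
    JetAux.chain' hU hφ hx₀ hso ((hG α).differentiable (by simp)).differentiableAt α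
  rw [Finset.sum_congr rfl fun α _ => h2 α, hjz] at hdiv
  exact hdiv
end
end

section
/- Let L : J → ℝ be a smooth Lagrangian, let X^i : ℝ^k × ℝ^n → ℝ (1 ≤ i ≤ n) be smooth (the components of a π-vertical vector field X = X^i ∂/∂q^i on E = ℝ^k × ℝ^n), and suppose there exist smooth functions g^α : ℝ^k × ℝ^n → ℝ (1 ≤ α ≤ k) such that at every point (x,q,v) ∈ J: X^i(x,q) · ∂L/∂q^i (x,q,v) + (∂X^i/∂x^α (x,q) + v^j_α ∂X^i/∂q^j (x,q)) · ∂L/∂v^i_α (x,q,v) = ∑_α [∂g^α/∂x^α (x,q) + v^i_α ∂g^α/∂q^i (x,q)] (i.e. X¹(L) = d_{T^{(0)}_α} g^α). Then the functions G^α(x,q,v) = g^α(x,q) − X^i(x,q) · ∂L/∂v^i_α (x,q,v) define a conservation law for the Euler–Lagrange equations of L. -/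
open Function

noncomputable section

variable {k n : ℕ}

/-- Partial derivative `∂f/∂xᵅ` of a function on `E = ℝᵏ × ℝⁿ`. -/
noncomputable def pdEX (f : (Fin k → ℝ) → (Fin n → ℝ) → ℝ) (α : Fin k)
    (x : Fin k → ℝ) (q : Fin n → ℝ) : ℝ :=
  deriv (fun t => f (Function.update x α t) q) (x α)

/-- Partial derivative `∂f/∂qⁱ` of a function on `E = ℝᵏ × ℝⁿ`. -/
noncomputable def pdEQ (f : (Fin k → ℝ) → (Fin n → ℝ) → ℝ) (i : Fin n)
    (x : Fin k → ℝ) (q : Fin n → ℝ) : ℝ :=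
  deriv (fun t => f x (Function.update q i t)) (q i)

section Aux

variable {k n : ℕ}

/-- Derivative of a doubly-nested coordinate update. -/
lemma hasDerivAt_update2 (x : Fin n → Fin k → ℝ) (i : Fin n) (α : Fin k) (t : ℝ) :
    HasDerivAt (fun s => Function.update x i (Function.update (x i) α s))
      (Pi.single i (Pi.single α 1)) t := by
  have h : (fun s => Function.update x i (Function.update (x i) α s))
      = fun s => x + (s - x i α) • (Pi.single i (Pi.single α (1 : ℝ)) : Fin n → Fin k → ℝ) := by
    funext s; funext j β
    rcases eq_or_ne j i with rfl | hj
    · rcases eq_or_ne β α with rfl | hβ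
      · simp
      · simp [Function.update_apply, hβ, Pi.single_apply]
    · simp [Function.update_apply, hj, Pi.single_apply]
  rw [h]
  simpa using (((hasDerivAt_id t).sub_const (x i α)).smul_const
    ((Pi.single i (Pi.single α (1 : ℝ)) : Fin n → Fin k → ℝ))).const_add x

lemma pdV_hasDerivAt {L : Jet k n → ℝ} (hL : Differentiable ℝ L) (i : Fin n) (α : Fin k)
    (z : Jet k n) :
    HasDerivAt (fun t => L (z.1, z.2.1,
        Function.update z.2.2 i (Function.update (z.2.2 i) α t)))
      (fderiv ℝ L z ((0, 0, Pi.single i (Pi.single α 1)) : Jet k n)) (z.2.2 i α) := by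
  have hc : HasDerivAt (fun t : ℝ => ((z.1, z.2.1,
        Function.update z.2.2 i (Function.update (z.2.2 i) α t)) : Jet k n))
      ((0, 0, Pi.single i (Pi.single α 1)) : Jet k n) (z.2.2 i α) :=
    (hasDerivAt_const _ _).prodMk ((hasDerivAt_const _ _).prodMk (hasDerivAt_update2 _ i α _))
  have hz : ((z.1, z.2.1,
      Function.update z.2.2 i (Function.update (z.2.2 i) α (z.2.2 i α))) : Jet k n) = z := by
    simp [Function.update_eq_self]
  have hF : HasFDerivAt L (fderiv ℝ L z) ((z.1, z.2.1,
      Function.update z.2.2 i (Function.update (z.2.2 i) α (z.2.2 i α))) : Jet k n) := by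
    rw [hz]; exact (hL z).hasFDerivAt
  exact hF.comp_hasDerivAt _ hc

lemma pdV_eq {L : Jet k n → ℝ} (hL : Differentiable ℝ L) (i : Fin n) (α : Fin k)
    (z : Jet k n) :
    pdV L i α z = fderiv ℝ L z ((0, 0, Pi.single i (Pi.single α 1)) : Jet k n) :=
  (pdV_hasDerivAt hL i α z).deriv

lemma contDiff_pdV {L : Jet k n → ℝ} (hL : ContDiff ℝ (⊤ : ℕ∞) L) (i : Fin n) (α : Fin k) :
    ContDiff ℝ (⊤ : ℕ∞) (pdV L i α) := by
  have h : pdV L i α = fun z =>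
      fderiv ℝ L z ((0, 0, Pi.single i (Pi.single α 1)) : Jet k n) :=
    funext (pdV_eq (hL.differentiable (by simp)) i α)
  rw [h]
  exact (hL.fderiv_right (mod_cast le_top)).clm_apply contDiff_const

lemma pD_hasDerivAt {φ : (Fin k → ℝ) → (Fin n → ℝ)} (hφ : Differentiable ℝ φ)
    (α : Fin k) (x : Fin k → ℝ) :
    HasDerivAt (fun t => φ (Function.update x α t)) (fderiv ℝ φ x (Pi.single α 1)) (x α) := by
  have hF : HasFDerivAt φ (fderiv ℝ φ x) (Function.update x α (x α)) := by
    rw [Function.update_eq_self]; exact (hφ x).hasFDerivAt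
  exact hF.comp_hasDerivAt _ (hasDerivAt_update x α (x α))

lemma pD_eq {φ : (Fin k → ℝ) → (Fin n → ℝ)} (hφ : Differentiable ℝ φ)
    (i : Fin n) (α : Fin k) (x : Fin k → ℝ) :
    pD φ i α x = fderiv ℝ φ x (Pi.single α 1) i := by
  have h := (ContinuousLinearMap.proj (R := ℝ) (φ := fun _ : Fin n => ℝ) i).hasFDerivAt.comp_hasDerivAt
    _ (pD_hasDerivAt hφ α x)
  exact h.deriv

lemma contDiff_pD {φ : (Fin k → ℝ) → (Fin n → ℝ)} (hφ : ContDiff ℝ (⊤ : ℕ∞) φ)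
    (i : Fin n) (α : Fin k) : ContDiff ℝ (⊤ : ℕ∞) (pD φ i α) := by
  have h : pD φ i α = fun x => fderiv ℝ φ x (Pi.single α 1) i :=
    funext (pD_eq (hφ.differentiable (by simp)) i α)
  rw [h]
  exact (contDiff_pi.1 ((hφ.fderiv_right (mod_cast le_top)).clm_apply contDiff_const)) i

lemma contDiff_j1 {φ : (Fin k → ℝ) → (Fin n → ℝ)} (hφ : ContDiff ℝ (⊤ : ℕ∞) φ) :
    ContDiff ℝ (⊤ : ℕ∞) (j1 φ) :=
  contDiff_id.prodMk (hφ.prodMk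
    (contDiff_pi.2 fun i => contDiff_pi.2 fun α => contDiff_pD hφ i α))

lemma pdEX_eq {f : (Fin k → ℝ) → (Fin n → ℝ) → ℝ}
    (hf : Differentiable ℝ (fun p : (Fin k → ℝ) × (Fin n → ℝ) => f p.1 p.2))
    (α : Fin k) (x : Fin k → ℝ) (q : Fin n → ℝ) :
    pdEX f α x q = fderiv ℝ (fun p : (Fin k → ℝ) × (Fin n → ℝ) => f p.1 p.2) (x, q)
      ((Pi.single α 1, 0) : (Fin k → ℝ) × (Fin n → ℝ)) := by
  have hc : HasDerivAt (fun t : ℝ => ((Function.update x α t, q) : (Fin k → ℝ) × (Fin n → ℝ)))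
      ((Pi.single α 1, 0) : (Fin k → ℝ) × (Fin n → ℝ)) (x α) :=
    (hasDerivAt_update x α (x α)).prodMk (hasDerivAt_const _ _)
  have hF : HasFDerivAt (fun p : (Fin k → ℝ) × (Fin n → ℝ) => f p.1 p.2)
      (fderiv ℝ (fun p : (Fin k → ℝ) × (Fin n → ℝ) => f p.1 p.2) (x, q))
      ((Function.update x α (x α), q) : (Fin k → ℝ) × (Fin n → ℝ)) := by
    rw [Function.update_eq_self]; exact (hf (x, q)).hasFDerivAt
  exact (hF.comp_hasDerivAt _ hc).deriv

lemma pdEQ_eq {f : (Fin k → ℝ) → (Fin n → ℝ) → ℝ}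
    (hf : Differentiable ℝ (fun p : (Fin k → ℝ) × (Fin n → ℝ) => f p.1 p.2))
    (i : Fin n) (x : Fin k → ℝ) (q : Fin n → ℝ) :
    pdEQ f i x q = fderiv ℝ (fun p : (Fin k → ℝ) × (Fin n → ℝ) => f p.1 p.2) (x, q)
      ((0, Pi.single i 1) : (Fin k → ℝ) × (Fin n → ℝ)) := by
  have hc : HasDerivAt (fun t : ℝ => ((x, Function.update q i t) : (Fin k → ℝ) × (Fin n → ℝ)))
      ((0, Pi.single i 1) : (Fin k → ℝ) × (Fin n → ℝ)) (q i) :=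
    (hasDerivAt_const _ _).prodMk (hasDerivAt_update q i (q i))
  have hF : HasFDerivAt (fun p : (Fin k → ℝ) × (Fin n → ℝ) => f p.1 p.2)
      (fderiv ℝ (fun p : (Fin k → ℝ) × (Fin n → ℝ) => f p.1 p.2) (x, q))
      ((x, Function.update q i (q i)) : (Fin k → ℝ) × (Fin n → ℝ)) := by
    rw [Function.update_eq_self]; exact (hf (x, q)).hasFDerivAt
  exact (hF.comp_hasDerivAt _ hc).deriv

/-- Chain rule for a function on `E = ℝᵏ × ℝⁿ` along the graph of `φ`. -/
lemma hasDerivAt_comp_E (f : (Fin k → ℝ) → (Fin n → ℝ) → ℝ)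
    (hf : ContDiff ℝ (⊤ : ℕ∞) (fun p : (Fin k → ℝ) × (Fin n → ℝ) => f p.1 p.2))
    {φ : (Fin k → ℝ) → (Fin n → ℝ)} (hφ : ContDiff ℝ (⊤ : ℕ∞) φ)
    (x : Fin k → ℝ) (α : Fin k) :
    HasDerivAt (fun t => f (Function.update x α t) (φ (Function.update x α t)))
      (pdEX f α x (φ x) + ∑ i : Fin n, pD φ i α x * pdEQ f i x (φ x)) (x α) := by
  have hfd : Differentiable ℝ (fun p : (Fin k → ℝ) × (Fin n → ℝ) => f p.1 p.2) :=
    hf.differentiable (by simp)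
  have hφd : Differentiable ℝ φ := hφ.differentiable (by simp)
  set D := fderiv ℝ φ x (Pi.single α 1) with hD
  have hc : HasDerivAt
      (fun t : ℝ => ((Function.update x α t, φ (Function.update x α t)) :
        (Fin k → ℝ) × (Fin n → ℝ)))
      ((Pi.single α 1, D) : (Fin k → ℝ) × (Fin n → ℝ)) (x α) :=
    (hasDerivAt_update x α (x α)).prodMk (pD_hasDerivAt hφd α x)
  have hF : HasFDerivAt (fun p : (Fin k → ℝ) × (Fin n → ℝ) => f p.1 p.2)
      (fderiv ℝ (fun p : (Fin k → ℝ) × (Fin n → ℝ) => f p.1 p.2) (x, φ x))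
      ((Function.update x α (x α), φ (Function.update x α (x α))) :
        (Fin k → ℝ) × (Fin n → ℝ)) := by
    rw [Function.update_eq_self]; exact (hfd (x, φ x)).hasFDerivAt
  have hcomp := hF.comp_hasDerivAt _ hc
  have hval : fderiv ℝ (fun p : (Fin k → ℝ) × (Fin n → ℝ) => f p.1 p.2) (x, φ x)
        ((Pi.single α 1, D) : (Fin k → ℝ) × (Fin n → ℝ))
      = pdEX f α x (φ x) + ∑ i : Fin n, pD φ i α x * pdEQ f i x (φ x) := by
    have hsplit : ((Pi.single α 1, D) : (Fin k → ℝ) × (Fin n → ℝ))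
        = (Pi.single α 1, 0) + (0, D) := by simp
    have hD1 : D = ∑ i : Fin n, D i • (Pi.single i (1 : ℝ) : Fin n → ℝ) := by
      funext j
      rw [Finset.sum_apply]
      simp [Pi.single_apply]
    have hDsum : ((0, D) : (Fin k → ℝ) × (Fin n → ℝ))
        = ∑ i : Fin n, D i • ((0 : Fin k → ℝ), (Pi.single i (1 : ℝ) : Fin n → ℝ)) := by
      refine Prod.ext ?_ ?_
      · rw [Prod.fst_sum]; simp
      · rw [Prod.snd_sum]
        simp only [Prod.smul_mk]
        exact hD1
    rw [hsplit, map_add, hDsum, map_sum]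
    rw [pdEX_eq hfd α x (φ x)]
    congr 1
    rw [Finset.sum_congr rfl fun i (_ : i ∈ Finset.univ) => map_smul
      (fderiv ℝ (fun p : (Fin k → ℝ) × (Fin n → ℝ) => f p.1 p.2) (x, φ x)) (D i) _]
    refine Finset.sum_congr rfl fun i _ => ?_
    rw [pdEQ_eq hfd i x (φ x), pD_eq hφd i α x, smul_eq_mul, ← hD]
  rw [hval] at hcomp
  exact hcomp

end Aux

/-- if the prolongation of the `π`-vertical vector field `X = Xⁱ ∂/∂qⁱ`
on `E` satisfies `X¹(L) = d_{T⁽⁰⁾_α} gᵅ`, then `Gᵅ = gᵅ ∘ π₁₀ − Θᵅ_L(X¹)`, i.e.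
`Gᵅ(x,q,v) = gᵅ(x,q) − Xⁱ(x,q)·∂L/∂vⁱ_α(x,q,v)`, defines a conservation law. -/
theorem statement6 (k n : ℕ) (hk : 1 ≤ k) (hn : 1 ≤ n)
    (L : Jet k n → ℝ) (hL : ContDiff ℝ (⊤ : ℕ∞) L)
    (X : Fin n → (Fin k → ℝ) → (Fin n → ℝ) → ℝ)
    (hX : ∀ i, ContDiff ℝ (⊤ : ℕ∞)
      (fun p : (Fin k → ℝ) × (Fin n → ℝ) => X i p.1 p.2))
    (g : Fin k → (Fin k → ℝ) → (Fin n → ℝ) → ℝ)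
    (hg : ∀ α, ContDiff ℝ (⊤ : ℕ∞)
      (fun p : (Fin k → ℝ) × (Fin n → ℝ) => g α p.1 p.2))
    (hsym : ∀ z : Jet k n,
      (∑ i : Fin n, X i z.1 z.2.1 * pdQ L i z)
      + (∑ i : Fin n, ∑ α : Fin k,
          (pdEX (X i) α z.1 z.2.1
            + ∑ j : Fin n, z.2.2 j α * pdEQ (X i) j z.1 z.2.1) * pdV L i α z)
      = ∑ α : Fin k,
          (pdEX (g α) α z.1 z.2.1
            + ∑ i : Fin n, z.2.2 i α * pdEQ (g α) i z.1 z.2.1)) :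
    IsConservationLaw L
      (fun α z => g α z.1 z.2.1 - ∑ i : Fin n, X i z.1 z.2.1 * pdV L i α z) := by
  intro φ hφsol x
  obtain ⟨hφ, hEL⟩ := hφsol
  have hφd : Differentiable ℝ φ := hφ.differentiable (by simp)
  have hLd : Differentiable ℝ L := hL.differentiable (by simp)
  -- derivative of the `pdV`-composite
  have hPdiff : ∀ (i : Fin n) (α : Fin k),
      HasDerivAt (fun t => pdV L i α (j1 φ (Function.update x α t)))
        (deriv (fun t => pdV L i α (j1 φ (Function.update x α t))) (x α)) (x α) := by
    intro i α
    have h1 : Differentiable ℝ (fun t => pdV L i α (j1 φ (Function.update x α t))) := by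
      have h2 := ((contDiff_pdV hL i α).comp (contDiff_j1 hφ)).differentiable (by simp)
      exact fun t => (h2 _).comp t (hasDerivAt_update x α t).differentiableAt
    exact (h1 (x α)).hasDerivAt
  have key : ∀ α : Fin k,
      HasDerivAt (fun t => g α (Function.update x α t) (φ (Function.update x α t))
          - ∑ i : Fin n, X i (Function.update x α t) (φ (Function.update x α t))
              * pdV L i α (j1 φ (Function.update x α t)))
        ((pdEX (g α) α x (φ x) + ∑ i : Fin n, pD φ i α x * pdEQ (g α) i x (φ x))
          - ∑ i : Fin n,
              ((pdEX (X i) α x (φ x) + ∑ j : Fin n, pD φ j α x * pdEQ (X i) j x (φ x))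
                  * pdV L i α (j1 φ x)
                + X i x (φ x) * deriv (fun t => pdV L i α (j1 φ (Function.update x α t))) (x α)))
        (x α) := by
    intro α
    refine (hasDerivAt_comp_E (g α) (hg α) hφ x α).sub (HasDerivAt.fun_sum fun i _ => ?_)
    have hmul := (hasDerivAt_comp_E (X i) (hX i) hφ x α).fun_mul (hPdiff i α)
    simpa [Function.update_eq_self] using hmul
  have hgoal : (∑ α : Fin k,
      deriv (fun t => g α (Function.update x α t) (φ (Function.update x α t))
          - ∑ i : Fin n, X i (Function.update x α t) (φ (Function.update x α t))
              * pdV L i α (j1 φ (Function.update x α t))) (x α)) = 0 := by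
    rw [Finset.sum_congr rfl fun α (_ : α ∈ Finset.univ) => (key α).deriv]
    have hs := hsym (j1 φ x)
    have e1 : (j1 φ x).1 = x := rfl
    have e2 : (j1 φ x).2.1 = φ x := rfl
    have e3 : ∀ (j : Fin n) (α : Fin k), (j1 φ x).2.2 j α = pD φ j α x := fun _ _ => rfl
    simp only [e1, e2, e3] at hs
    have h1 : (∑ α : Fin k, ∑ i : Fin n,
        X i x (φ x) * deriv (fun t => pdV L i α (j1 φ (Function.update x α t))) (x α))
        = ∑ i : Fin n, X i x (φ x) * pdQ L i (j1 φ x) := by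
      rw [Finset.sum_comm]
      exact Finset.sum_congr rfl fun i _ => by rw [← Finset.mul_sum, hEL i x]
    have h2 : (∑ α : Fin k, ∑ i : Fin n,
        (pdEX (X i) α x (φ x) + ∑ j : Fin n, pD φ j α x * pdEQ (X i) j x (φ x))
          * pdV L i α (j1 φ x))
        = ∑ i : Fin n, ∑ α : Fin k,
        (pdEX (X i) α x (φ x) + ∑ j : Fin n, pD φ j α x * pdEQ (X i) j x (φ x))
          * pdV L i α (j1 φ x) := Finset.sum_comm
    rw [Finset.sum_add_distrib] at hs
    rw [Finset.sum_sub_distrib]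
    simp only [Finset.sum_add_distrib]
    rw [h1, h2]
    linarith [hs]
  exact hgoal
end
end

section
/- (Conservation law for the minimal surface equation from the variational symmetry X = −q ∂/∂x¹ − q ∂/∂x² + (x¹+x²) ∂/∂q.) Let φ : ℝ² → ℝ be a smooth solution of the minimal surface equation (1 + (∂₂φ)²) ∂₁₁φ − 2 ∂₁φ ∂₂φ ∂₁₂φ + (1 + (∂₁φ)²) ∂₂₂φ = 0. Write p = ∂₁φ, r = ∂₂φ, W = √(1 + p² + r²). Define G¹, G² : ℝ² → ℝ by G¹ = (−φ(1 + r² − p r) + (x¹+x²) p)/W and G² = (−φ(1 + p² − p r) + (x¹+x²) r)/W. Then ∂G¹/∂x¹ + ∂G²/∂x² = 0 identically on ℝ². -/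
open Function

noncomputable section

/-- Partial derivative `∂φ/∂xᵅ` of a scalar field `φ : ℝ² → ℝ`. -/
noncomputable def dphi (φ : (Fin 2 → ℝ) → ℝ) (α : Fin 2) (x : Fin 2 → ℝ) : ℝ :=
  deriv (fun t => φ (Function.update x α t)) (x α)

/-- Second partial derivative `∂²φ/∂xᵅ∂xᵝ` of a scalar field `φ : ℝ² → ℝ`. -/
noncomputable def d2phi (φ : (Fin 2 → ℝ) → ℝ) (α β : Fin 2) (x : Fin 2 → ℝ) : ℝ :=
  deriv (fun t => dphi φ β (Function.update x α t)) (x α)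

/-- The component `G¹ = (−φ(1 + r² − pr) + (x¹+x²)p)/W` with `p = ∂₁φ`, `r = ∂₂φ`,
`W = √(1 + p² + r²)`. -/
noncomputable def G1 (φ : (Fin 2 → ℝ) → ℝ) (y : Fin 2 → ℝ) : ℝ :=
  (-(φ y) * (1 + (dphi φ 1 y)^2 - dphi φ 0 y * dphi φ 1 y)
      + (y 0 + y 1) * dphi φ 0 y)
    / Real.sqrt (1 + (dphi φ 0 y)^2 + (dphi φ 1 y)^2)

/-- The component `G² = (−φ(1 + p² − pr) + (x¹+x²)r)/W` with `p = ∂₁φ`, `r = ∂₂φ`,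
`W = √(1 + p² + r²)`. -/
noncomputable def G2 (φ : (Fin 2 → ℝ) → ℝ) (y : Fin 2 → ℝ) : ℝ :=
  (-(φ y) * (1 + (dphi φ 0 y)^2 - dphi φ 0 y * dphi φ 1 y)
      + (y 0 + y 1) * dphi φ 1 y)
    / Real.sqrt (1 + (dphi φ 0 y)^2 + (dphi φ 1 y)^2)

lemma update_eq_line (x : Fin 2 → ℝ) (α : Fin 2) (t : ℝ) :
    Function.update x α t = x + (t - x α) • (Pi.single α 1 : Fin 2 → ℝ) := by
  ext β
  by_cases h : β = α
  · subst h; simp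
  · simp [Function.update_of_ne h, Pi.single_apply, h]

lemma hasDerivAt_line (f : (Fin 2 → ℝ) → ℝ) {x : Fin 2 → ℝ} (α : Fin 2)
    (hf : DifferentiableAt ℝ f x) :
    HasDerivAt (fun t => f (Function.update x α t)) (fderiv ℝ f x (Pi.single α 1)) (x α) := by
  have h1 : HasDerivAt (fun t : ℝ => t - x α) 1 (x α) := (hasDerivAt_id _).sub_const _
  have hL : HasDerivAt (fun t : ℝ => x + (t - x α) • (Pi.single α 1 : Fin 2 → ℝ))
      ((Pi.single α 1 : Fin 2 → ℝ)) (x α) := by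
    simpa using (h1.smul_const (Pi.single α 1 : Fin 2 → ℝ)).const_add x
  have hfx : HasFDerivAt f (fderiv ℝ f x)
      (x + (x α - x α) • (Pi.single α 1 : Fin 2 → ℝ)) := by simpa using hf.hasFDerivAt
  have hcomp := hfx.comp_hasDerivAt (x := x α) hL
  simpa [← update_eq_line, Function.comp_def] using hcomp

lemma hasDerivAt_dphi (f : (Fin 2 → ℝ) → ℝ) {x : Fin 2 → ℝ} (α : Fin 2)
    (hf : DifferentiableAt ℝ f x) :
    HasDerivAt (fun t => f (Function.update x α t)) (dphi f α x) (x α) := by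
  have h := hasDerivAt_line f α hf
  have e : dphi f α x = fderiv ℝ f x (Pi.single α 1) := h.deriv
  rw [e]; exact h

lemma contDiff_dphi {φ : (Fin 2 → ℝ) → ℝ} (hφ : ContDiff ℝ (⊤ : ℕ∞) φ) (β : Fin 2) :
    ContDiff ℝ (⊤ : ℕ∞) (dphi φ β) := by
  have hd : Differentiable ℝ φ := hφ.differentiable (by norm_cast)
  have h : dphi φ β = fun y => fderiv ℝ φ y (Pi.single β 1) := by
    funext y
    exact (hasDerivAt_line φ β (hd y)).deriv
  rw [h]
  exact (hφ.fderiv_right (by norm_cast)).clm_apply contDiff_const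

lemma d2phi_eq {φ : (Fin 2 → ℝ) → ℝ} (hφ : ContDiff ℝ (⊤ : ℕ∞) φ) (α β : Fin 2)
    (x : Fin 2 → ℝ) :
    d2phi φ α β x = fderiv ℝ (fderiv ℝ φ) x (Pi.single α 1) (Pi.single β 1) := by
  have hd : Differentiable ℝ φ := hφ.differentiable (by norm_cast)
  have hdβ : DifferentiableAt ℝ (dphi φ β) x :=
    ((contDiff_dphi hφ β).differentiable (by norm_cast)) x
  have e1 : d2phi φ α β x = fderiv ℝ (dphi φ β) x (Pi.single α 1) :=
    (hasDerivAt_line (dphi φ β) α hdβ).deriv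
  have e2 : dphi φ β = fun y => (fderiv ℝ φ y) (Pi.single β 1) := by
    funext y; exact (hasDerivAt_line φ β (hd y)).deriv
  rw [e1, e2]
  have hdf : DifferentiableAt ℝ (fderiv ℝ φ) x :=
    ((hφ.fderiv_right (m := ((⊤:ℕ∞):WithTop ℕ∞)) (by norm_cast)).differentiable (by norm_cast)) x
  rw [fderiv_clm_apply hdf (differentiableAt_const _)]
  simp

lemma d2phi_symm {φ : (Fin 2 → ℝ) → ℝ} (hφ : ContDiff ℝ (⊤ : ℕ∞) φ) (x : Fin 2 → ℝ) :
    d2phi φ 1 0 x = d2phi φ 0 1 x := by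
  rw [d2phi_eq hφ, d2phi_eq hφ]
  exact (hφ.contDiffAt.isSymmSndFDerivAt (by rw [minSmoothness_of_isRCLikeNormedField]; norm_cast)) _ _

/-- conservation law for the minimal surface equation coming from the
variational symmetry `X = −q∂/∂x¹ − q∂/∂x² + (x¹+x²)∂/∂q`: if `φ` solves
`(1 + (∂₂φ)²)∂₁₁φ − 2∂₁φ∂₂φ∂₁₂φ + (1 + (∂₁φ)²)∂₂₂φ = 0`, then
`∂G¹/∂x¹ + ∂G²/∂x² = 0` identically on `ℝ²`. -/
theorem statement15 (φ : (Fin 2 → ℝ) → ℝ) (hφ : ContDiff ℝ (⊤ : ℕ∞) φ)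
    (hms : ∀ x : Fin 2 → ℝ,
      (1 + (dphi φ 1 x)^2) * d2phi φ 0 0 x
        - 2 * dphi φ 0 x * dphi φ 1 x * d2phi φ 0 1 x
        + (1 + (dphi φ 0 x)^2) * d2phi φ 1 1 x = 0) :
    ∀ x : Fin 2 → ℝ,
      deriv (fun t => G1 φ (Function.update x 0 t)) (x 0)
      + deriv (fun t => G2 φ (Function.update x 1 t)) (x 1)
      = 0 := by
  have hd : Differentiable ℝ φ := hφ.differentiable (by norm_cast)
  have hdp : Differentiable ℝ (dphi φ 0) := (contDiff_dphi hφ 0).differentiable (by norm_cast)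
  have hdr : Differentiable ℝ (dphi φ 1) := (contDiff_dphi hφ 1).differentiable (by norm_cast)
  intro x
  -- derivatives along coordinate 0
  have hA0 : HasDerivAt (fun t => φ (Function.update x 0 t)) (dphi φ 0 x) (x 0) :=
    hasDerivAt_dphi φ 0 (hd x)
  have hp0 : HasDerivAt (fun t => dphi φ 0 (Function.update x 0 t)) (d2phi φ 0 0 x) (x 0) :=
    hasDerivAt_dphi (dphi φ 0) 0 (hdp x)
  have hr0 : HasDerivAt (fun t => dphi φ 1 (Function.update x 0 t)) (d2phi φ 0 1 x) (x 0) :=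
    hasDerivAt_dphi (dphi φ 1) 0 (hdr x)
  -- derivatives along coordinate 1
  have hA1 : HasDerivAt (fun t => φ (Function.update x 1 t)) (dphi φ 1 x) (x 1) :=
    hasDerivAt_dphi φ 1 (hd x)
  have hp1 : HasDerivAt (fun t => dphi φ 0 (Function.update x 1 t)) (d2phi φ 1 0 x) (x 1) :=
    hasDerivAt_dphi (dphi φ 0) 1 (hdp x)
  have hr1 : HasDerivAt (fun t => dphi φ 1 (Function.update x 1 t)) (d2phi φ 1 1 x) (x 1) :=
    hasDerivAt_dphi (dphi φ 1) 1 (hdr x)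
  have hne0 : 1 + (dphi φ 0 (Function.update x 0 (x 0)))^2
      + (dphi φ 1 (Function.update x 0 (x 0)))^2 ≠ 0 := by
    rw [Function.update_eq_self]; positivity
  have hne1 : 1 + (dphi φ 0 (Function.update x 1 (x 1)))^2
      + (dphi φ 1 (Function.update x 1 (x 1)))^2 ≠ 0 := by
    rw [Function.update_eq_self]; positivity
  have hsne0 : Real.sqrt (1 + (dphi φ 0 (Function.update x 0 (x 0)))^2
      + (dphi φ 1 (Function.update x 0 (x 0)))^2) ≠ 0 := by
    rw [Function.update_eq_self]; positivity
  have hsne1 : Real.sqrt (1 + (dphi φ 0 (Function.update x 1 (x 1)))^2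
      + (dphi φ 1 (Function.update x 1 (x 1)))^2) ≠ 0 := by
    rw [Function.update_eq_self]; positivity
  have hg0 := ((hA0.neg.mul (((hasDerivAt_const (x 0) (1:ℝ)).add (hr0.pow 2)).sub
      (hp0.mul hr0))).add (((hasDerivAt_id (x 0)).add_const (x 1)).mul hp0)).div
      ((((hasDerivAt_const (x 0) (1:ℝ)).add (hp0.pow 2)).add (hr0.pow 2)).sqrt hne0) hsne0
  have hg1 := ((hA1.neg.mul (((hasDerivAt_const (x 1) (1:ℝ)).add (hp1.pow 2)).sub
      (hp1.mul hr1))).add (((hasDerivAt_id (x 1)).const_add (x 0)).mul hr1)).div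
      ((((hasDerivAt_const (x 1) (1:ℝ)).add (hp1.pow 2)).add (hr1.pow 2)).sqrt hne1) hsne1
  simp only [Function.update_eq_self, id_eq, Pi.add_apply, Pi.sub_apply, Pi.mul_apply,
    Pi.neg_apply, Pi.pow_apply, Pi.div_apply] at hg0 hg1
  have e1 : deriv (fun t => G1 φ (Function.update x 0 t)) (x 0) = _ := hg0.deriv
  have e2 : deriv (fun t => G2 φ (Function.update x 1 t)) (x 1) = _ := hg1.deriv
  rw [e1, e2, d2phi_symm hφ x]
  have hw0 : Real.sqrt (1 + dphi φ 0 x ^ 2 + dphi φ 1 x ^ 2) ≠ 0 := by positivity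
  have hw2 : Real.sqrt (1 + dphi φ 0 x ^ 2 + dphi φ 1 x ^ 2) ^ 2
      = 1 + dphi φ 0 x ^ 2 + dphi φ 1 x ^ 2 := Real.sq_sqrt (by positivity)
  have hM := hms x
  field_simp
  linear_combination
    (2 * ((x 0 + x 1) * (d2phi φ 0 0 x + d2phi φ 1 1 x)
        + φ x * (dphi φ 1 x * (d2phi φ 0 0 x - d2phi φ 0 1 x)
            + dphi φ 0 x * (d2phi φ 1 1 x - d2phi φ 0 1 x)))) * hw2
    + (2 * (x 0 + x 1 + φ x * (dphi φ 0 x + dphi φ 1 x))) * hM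
end
end
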